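/- Let d ≥ 3 and for each natural number i define T = {e₀, e₁, …, e_{d-2}} ⊆ ℤ^d (where e₀ = 0 and e₁,…,e_d is the standard basis), a_i = e_d - i·e_{d-1}, p_i = {0, e_{d-1}, 2e_{d-1}, …, (i-1)e_{d-1}}, and A_i = (T ∪ (a_i - T)) + p_i. Then |A_i| = (2d-2)·i and dim(A_i) = d for i ≥ 2. -/
import Mathlib


open Finset Pointwise

theorem stmt_17 {d : ℕ} (hd : 3 ≤ d) (i : ℕ) (hi : 2 ≤ i)
    (e : Fin d → (Fin d → ℝ)) (he : ∀ k, e k = Pi.single k 1)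
    (T : Finset (Fin d → ℝ))
    (hT : T = insert 0 ((Finset.univ.filter (fun k : Fin d => (k : ℕ) < d - 2)).image e))
    (a : Fin d → ℝ)
    (ha : a = e ⟨d - 1, by omega⟩ - (i : ℝ) • e ⟨d - 2, by omega⟩)
    (p : Finset (Fin d → ℝ))
    (hp : p = (Finset.range i).image (fun k : ℕ => (k : ℝ) • e ⟨d - 2, by omega⟩))
    (A : Finset (Fin d → ℝ))
    (hA : A = (T ∪ ({a} - T)) + p) :
    A.card = (2 * d - 2) * i ∧
    Module.finrank ℝ (affineSpan ℝ (A : Set (Fin d → ℝ))).direction = d := by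
  have hd2 : d - 2 < d := by omega
  have hd1 : d - 1 < d := by omega
  have heval : ∀ k j : Fin d, e k j = if (j : ℕ) = (k : ℕ) then 1 else 0 := by
    intro k j
    rw [he, Pi.single_apply]
    congr 1
    simp [Fin.ext_iff]
  have hv2 : ((⟨d - 2, hd2⟩ : Fin d) : ℕ) = d - 2 := rfl
  have hv1 : ((⟨d - 1, hd1⟩ : Fin d) : ℕ) = d - 1 := rfl
  -- coordinate facts
  have haD2 : a ⟨d - 2, hd2⟩ = -(i : ℝ) := by
    rw [ha]
    simp only [Pi.sub_apply, Pi.smul_apply, smul_eq_mul, heval, hv1, hv2]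
    rw [if_neg (show ¬ (d - 2 = d - 1) by omega)]
    simp
  have haD1 : a ⟨d - 1, hd1⟩ = 1 := by
    rw [ha]
    simp only [Pi.sub_apply, Pi.smul_apply, smul_eq_mul, heval, hv1, hv2]
    rw [if_neg (show ¬ (d - 1 = d - 2) by omega)]
    simp
  have hTD2 : ∀ x ∈ T, x ⟨d - 2, hd2⟩ = 0 := by
    intro x hx
    rw [hT] at hx
    rcases Finset.mem_insert.mp hx with h0 | hx
    · simp [h0]
    · obtain ⟨m, hm, rfl⟩ := Finset.mem_image.mp hx
      have hm' : (m : ℕ) < d - 2 := (Finset.mem_filter.mp hm).2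
      rw [heval, hv2, if_neg (by omega)]
  have hTD1 : ∀ x ∈ T, x ⟨d - 1, hd1⟩ = 0 := by
    intro x hx
    rw [hT] at hx
    rcases Finset.mem_insert.mp hx with h0 | hx
    · simp [h0]
    · obtain ⟨m, hm, rfl⟩ := Finset.mem_image.mp hx
      have hm' : (m : ℕ) < d - 2 := (Finset.mem_filter.mp hm).2
      rw [heval, hv1, if_neg (by omega)]
  have hSD2 : ∀ x ∈ T ∪ ({a} - T), x ⟨d - 2, hd2⟩ = 0 ∨ x ⟨d - 2, hd2⟩ = -(i : ℝ) := by
    intro x hx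
    rcases Finset.mem_union.mp hx with hx | hx
    · exact Or.inl (hTD2 x hx)
    · obtain ⟨b, hb, c, hc, rfl⟩ := Finset.mem_sub.mp hx
      rw [Finset.mem_singleton] at hb
      subst hb
      right
      simp [haD2, hTD2 c hc]
  -- cardinality of T
  have hfilter : (Finset.univ.filter (fun k : Fin d => (k : ℕ) < d - 2)) =
      (Finset.range (d - 2)).attachFin (fun m hm => by
        have := Finset.mem_range.mp hm; omega) := by
    ext k
    simp [Finset.mem_attachFin]
  have hfcard : (Finset.univ.filter (fun k : Fin d => (k : ℕ) < d - 2)).card = d - 2 := by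
    rw [hfilter, Finset.card_attachFin, Finset.card_range]
  have heinj : Set.InjOn e ↑(Finset.univ.filter (fun k : Fin d => (k : ℕ) < d - 2)) := by
    intro m _ m' _ h
    have := congrFun h m'
    rw [heval, heval, if_pos rfl] at this
    by_contra hne
    rw [if_neg (fun hc => hne (Fin.ext hc.symm))] at this
    norm_num at this
  have h0ni : (0 : Fin d → ℝ) ∉ (Finset.univ.filter (fun k : Fin d => (k : ℕ) < d - 2)).image e := by
    intro h
    obtain ⟨m, _, hm⟩ := Finset.mem_image.mp h
    have := congrFun hm m
    rw [heval, if_pos rfl] at this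
    norm_num at this
  have hcardT : T.card = d - 1 := by
    rw [hT, Finset.card_insert_of_notMem h0ni, Finset.card_image_of_injOn heinj, hfcard]
    omega
  have hsubT : ({a} - T) = T.image (fun t => a - t) := by
    ext x
    simp only [Finset.mem_sub, Finset.mem_singleton, Finset.mem_image]
    constructor
    · rintro ⟨b, rfl, c, hc, rfl⟩; exact ⟨c, hc, rfl⟩
    · rintro ⟨c, hc, rfl⟩; exact ⟨a, rfl, c, hc, rfl⟩
  have hcardsub : ({a} - T).card = d - 1 := by
    rw [hsubT, Finset.card_image_of_injOn (fun x _ y _ h => by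
      have := sub_right_injective h; exact this), hcardT]
  have hdisj : Disjoint T ({a} - T) := by
    rw [Finset.disjoint_left]
    intro x hx hx'
    obtain ⟨b, hb, c, hc, rfl⟩ := Finset.mem_sub.mp hx'
    rw [Finset.mem_singleton] at hb
    subst hb
    have h1 := hTD1 _ hx
    rw [Pi.sub_apply, haD1, hTD1 c hc] at h1
    norm_num at h1
  have hcardS : (T ∪ ({a} - T)).card = 2 * d - 2 := by
    rw [Finset.card_union_of_disjoint hdisj, hcardT, hcardsub]
    omega
  -- cardinality of p
  have hpinj : Set.InjOn (fun k : ℕ => (k : ℝ) • e ⟨d - 2, by omega⟩) ↑(Finset.range i) := by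
    intro k _ k' _ h
    have := congrFun h ⟨d - 2, hd2⟩
    simp only [Pi.smul_apply, smul_eq_mul, heval, hv2] at this
    norm_num at this
    exact_mod_cast this
  have hcardp : p.card = i := by
    rw [hp, Finset.card_image_of_injOn hpinj, Finset.card_range]
  -- cardinality of A
  have hcardA : A.card = (2 * d - 2) * i := by
    rw [hA, Finset.add_def, Finset.card_image_of_injOn, Finset.card_product, hcardS, hcardp]
    intro q1 hq1 q2 hq2 heq
    dsimp only at heq
    simp only [Finset.coe_product, Set.mem_prod, Finset.mem_coe] at hq1 hq2
    obtain ⟨hx1, hy1⟩ := hq1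
    obtain ⟨hx2, hy2⟩ := hq2
    obtain ⟨k1, hk1, hk1e⟩ := Finset.mem_image.mp (hp ▸ hy1)
    obtain ⟨k2, hk2, hk2e⟩ := Finset.mem_image.mp (hp ▸ hy2)
    rw [Finset.mem_range] at hk1 hk2
    have hy1v : q1.2 ⟨d - 2, hd2⟩ = (k1 : ℝ) := by
      rw [← hk1e]; simp [heval]
    have hy2v : q2.2 ⟨d - 2, hd2⟩ = (k2 : ℝ) := by
      rw [← hk2e]; simp [heval]
    have heqD2 : q1.1 ⟨d - 2, hd2⟩ + (k1 : ℝ) = q2.1 ⟨d - 2, hd2⟩ + (k2 : ℝ) := by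
      have := congrFun heq ⟨d - 2, hd2⟩
      simpa [hy1v, hy2v] using this
    have hk1r : (k1 : ℝ) < i := by exact_mod_cast hk1
    have hk2r : (k2 : ℝ) < i := by exact_mod_cast hk2
    have hk1nn : (0 : ℝ) ≤ k1 := Nat.cast_nonneg _
    have hk2nn : (0 : ℝ) ≤ k2 := Nat.cast_nonneg _
    have hkk : (k1 : ℝ) = (k2 : ℝ) := by
      rcases hSD2 _ hx1 with h1 | h1 <;> rcases hSD2 _ hx2 with h2 | h2 <;>
        rw [h1, h2] at heqD2 <;> linarith
    have hk12 : k1 = k2 := by exact_mod_cast hkk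
    have hy12 : q1.2 = q2.2 := by rw [← hk1e, ← hk2e, hk12]
    have hx12 : q1.1 = q2.1 := by
      have := heq
      rw [hy12] at this
      exact add_right_cancel this
    exact Prod.ext hx12 hy12
  refine ⟨hcardA, ?_⟩
  -- dimension
  have h0T : (0 : Fin d → ℝ) ∈ T := by rw [hT]; exact Finset.mem_insert_self _ _
  have hmemA : ∀ x ∈ T ∪ ({a} - T), ∀ y ∈ p, x + y ∈ A := by
    intro x hx y hy
    rw [hA]
    exact Finset.mem_add.mpr ⟨x, hx, y, hy, rfl⟩
  have hpel : ∀ k : ℕ, k < i → ((k : ℝ) • e ⟨d - 2, hd2⟩) ∈ p := by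
    intro k hk
    rw [hp]
    exact Finset.mem_image.mpr ⟨k, Finset.mem_range.mpr hk, rfl⟩
  have h0p : (0 : Fin d → ℝ) ∈ p := by
    have := hpel 0 (by omega)
    simpa using this
  have h0A : (0 : Fin d → ℝ) ∈ A := by
    have := hmemA 0 (Finset.mem_union_left _ h0T) 0 h0p
    simpa using this
  have haS : a ∈ T ∪ ({a} - T) := by
    refine Finset.mem_union_right _ (Finset.mem_sub.mpr ⟨a, Finset.mem_singleton_self _, 0, h0T, ?_⟩)
    simp
  have hkey : ∀ j : Fin d, e j ∈ vectorSpan ℝ (A : Set (Fin d → ℝ)) := by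
    intro j
    by_cases hj1 : (j : ℕ) < d - 2
    · have hjT : e j ∈ T := by
        rw [hT]
        exact Finset.mem_insert_of_mem (Finset.mem_image.mpr ⟨j, by simp [hj1], rfl⟩)
      have hjA : e j ∈ A := by
        have := hmemA (e j) (Finset.mem_union_left _ hjT) 0 h0p
        simpa using this
      have := vsub_mem_vectorSpan ℝ (Finset.mem_coe.mpr hjA)
        (Finset.mem_coe.mpr h0A)
      simpa using this
    · by_cases hj2 : (j : ℕ) = d - 2
      · have hjD2 : j = ⟨d - 2, hd2⟩ := Fin.ext hj2
        have h1A : e ⟨d - 2, hd2⟩ ∈ A := by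
          have := hmemA 0 (Finset.mem_union_left _ h0T) _ (hpel 1 (by omega))
          simpa using this
        have := vsub_mem_vectorSpan ℝ (Finset.mem_coe.mpr h1A) (Finset.mem_coe.mpr h0A)
        rw [hjD2]
        simpa using this
      · have hjlt : (j : ℕ) < d := j.isLt
        have hjD1 : j = ⟨d - 1, hd1⟩ := Fin.ext (show (j : ℕ) = d - 1 by omega)
        have hv1A : a + ((i - 1 : ℕ) : ℝ) • e ⟨d - 2, hd2⟩ ∈ A :=
          hmemA a haS _ (hpel (i - 1) (by omega))
        have hv2A : e ⟨d - 2, hd2⟩ ∈ A := by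
          have := hmemA 0 (Finset.mem_union_left _ h0T) _ (hpel 1 (by omega))
          simpa using this
        have m1 := vsub_mem_vectorSpan ℝ (Finset.mem_coe.mpr hv1A) (Finset.mem_coe.mpr h0A)
        have m2 := vsub_mem_vectorSpan ℝ (Finset.mem_coe.mpr hv2A) (Finset.mem_coe.mpr h0A)
        rw [vsub_eq_sub, sub_zero] at m1 m2
        have hsum := Submodule.add_mem _ m1 m2
        have hcast : ((i - 1 : ℕ) : ℝ) = (i : ℝ) - 1 := by
          push_cast [Nat.cast_sub (by omega : 1 ≤ i)]; ring
        have : (a + ((i - 1 : ℕ) : ℝ) • e ⟨d - 2, hd2⟩) + e ⟨d - 2, hd2⟩ = e ⟨d - 1, hd1⟩ := by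
          rw [ha, hcast]
          module
        rw [this] at hsum
        rw [hjD1]
        exact hsum
  have hspan : vectorSpan ℝ (A : Set (Fin d → ℝ)) = ⊤ := by
    rw [eq_top_iff]
    intro x _
    rw [pi_eq_sum_univ x]
    refine Submodule.sum_mem _ fun j _ => Submodule.smul_mem _ _ ?_
    have : (fun j' : Fin d => if j = j' then (1 : ℝ) else 0) = e j := by
      ext j'
      rw [heval]
      simp [eq_comm, Fin.ext_iff]
    rw [this]
    exact hkey j
  rw [direction_affineSpan, hspan, finrank_top]
  exact Module.finrank_fin_fun ℝ
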